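/- Let X and Y be Banach spaces, G ∈ L(X,Y) with ‖G‖ = 1, and T ∈ L(X,Y). Then V_G(T) = { lim_n y_n*(T x_n) : (x_n) ⊂ S_X, (y_n*) ⊂ S_{Y*}, Re y_n*(G x_n) → 1 and the limit lim_n y_n*(T x_n) exists }. -/

import Mathlib

open Filter Topology

variable {𝕜 : Type*} [RCLike 𝕜]

/-- The numerical range of `T` with respect to `G`:
`V_G(T) := ⋂_{δ>0} closure {y*(Tx) : x ∈ S_X, y* ∈ S_{Y*}, Re y*(Gx) > 1 - δ}`. -/
def VG {X Y : Type*} [NormedAddCommGroup X] [NormedSpace 𝕜 X]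
    [NormedAddCommGroup Y] [NormedSpace 𝕜 Y] (G T : X →L[𝕜] Y) : Set 𝕜 :=
  ⋂ δ ∈ Set.Ioi (0 : ℝ),
    closure {z : 𝕜 | ∃ (x : X) (f : Y →L[𝕜] 𝕜),
      ‖x‖ = 1 ∧ ‖f‖ = 1 ∧ 1 - δ < RCLike.re (f (G x)) ∧ z = f (T x)}

/-- For Banach spaces `X, Y`, a norm-one operator `G ∈ L(X,Y)` and `T ∈ L(X,Y)`,
`V_G(T) = { lim_n y_n*(T x_n) : (x_n) ⊂ S_X, (y_n*) ⊂ S_{Y*}, Re y_n*(G x_n) → 1 }`. -/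
theorem stmt_4 {X Y : Type*} [NormedAddCommGroup X] [NormedSpace 𝕜 X] [CompleteSpace X]
    [NormedAddCommGroup Y] [NormedSpace 𝕜 Y] [CompleteSpace Y]
    (G : X →L[𝕜] Y) (hG : ‖G‖ = 1) (T : X →L[𝕜] Y) :
    VG G T = {z : 𝕜 | ∃ (x : ℕ → X) (y : ℕ → (Y →L[𝕜] 𝕜)),
      (∀ n, ‖x n‖ = 1) ∧ (∀ n, ‖y n‖ = 1) ∧
      Tendsto (fun n => RCLike.re ((y n) (G (x n)))) atTop (𝓝 1) ∧
      Tendsto (fun n => (y n) (T (x n))) atTop (𝓝 z)} := by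
  ext z
  simp only [VG, Set.mem_iInter, Set.mem_setOf_eq]
  constructor
  · intro hz
    have h : ∀ n : ℕ, ∃ (x : X) (f : Y →L[𝕜] 𝕜), ‖x‖ = 1 ∧ ‖f‖ = 1 ∧
        1 - 1/(n+1) < RCLike.re (f (G x)) ∧ ‖f (T x) - z‖ < 1/(n+1) := by
      intro n
      have hpos : (0:ℝ) < 1/(n+1) := by positivity
      have hmem := hz (1/(n+1)) hpos
      rcases Metric.mem_closure_iff.mp hmem (1/(n+1)) hpos with ⟨w, hw, hd⟩
      obtain ⟨x, f, hx, hf, hre, hzw⟩ := hw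
      refine ⟨x, f, hx, hf, hre, ?_⟩
      rw [← hzw]
      simpa [dist_eq_norm, norm_sub_rev] using hd
    choose x f hx hf hre hlim using h
    refine ⟨x, f, hx, hf, ?_, ?_⟩
    · have h0 : Tendsto (fun n : ℕ => 1 - 1/((n:ℝ)+1)) atTop (𝓝 1) := by
        have := (tendsto_one_div_add_atTop_nhds_zero_nat : Tendsto (fun n : ℕ => 1 / ((n:ℝ) + 1)) atTop (𝓝 0))
        simpa using (tendsto_const_nhds (x := (1:ℝ))).sub this
      refine tendsto_of_tendsto_of_tendsto_of_le_of_le h0 tendsto_const_nhds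
        (fun n => (hre n).le) (fun n => ?_)
      calc RCLike.re ((f n) (G (x n))) ≤ ‖(f n) (G (x n))‖ := RCLike.re_le_norm _
        _ ≤ ‖f n‖ * ‖G (x n)‖ := (f n).le_opNorm _
        _ ≤ ‖f n‖ * (‖G‖ * ‖x n‖) :=
            mul_le_mul_of_nonneg_left (G.le_opNorm _) (norm_nonneg _)
        _ = 1 := by rw [hf, hG, hx]; ring
    · rw [tendsto_iff_norm_sub_tendsto_zero]
      refine squeeze_zero (fun n => norm_nonneg _) (fun n => (hlim n).le) ?_
      exact tendsto_one_div_add_atTop_nhds_zero_nat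
  · rintro ⟨x, y, hx, hy, hre, hlim⟩ δ hδ
    apply mem_closure_of_tendsto hlim
    have hev : ∀ᶠ n in atTop, 1 - δ < RCLike.re ((y n) (G (x n))) :=
      hre.eventually (eventually_gt_nhds (by simpa using hδ))
    filter_upwards [hev] with n hn
    exact ⟨x n, y n, hx n, hy n, hn, rfl⟩
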